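/- For all nonnegative integers n, positive integers k, and real (or rational polynomial variable) x, Ch_n^{(k)}(x) = Σ_{l=0}^{n} s(n,l) E_l^{(k)}(x), where s(n,l) are the signed Stirling numbers of the first kind and E_l^{(k)}(x) are the higher-order Euler polynomials. -/

import Mathlib

open PowerSeries Finset

/-- Higher-order Changhee numbers of the first kind. -/
noncomputable def Ch (k n : ℕ) : ℚ := (-1/2)^n * n.factorial * ((n+k-1).choose n)

/-- Signed Stirling numbers of the first kind, via coefficients of the falling factorial. -/
noncomputable def stirling1 (n l : ℕ) : ℚ :=
  (∏ i ∈ Finset.range n, (Polynomial.X - (i : Polynomial ℚ))).coeff l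

/-- Stirling numbers of the second kind, via (e^t-1)^n = n! Σ S₂(m,n) t^m/m!. -/
noncomputable def stirling2 (m n : ℕ) : ℚ :=
  (m.factorial : ℚ) / n.factorial * PowerSeries.coeff (R := ℚ) m ((PowerSeries.exp ℚ - 1)^n)

/-- Higher-order Euler numbers, from (2/(e^t+1))^k. -/
noncomputable def EulerN (k l : ℕ) : ℚ :=
  l.factorial * PowerSeries.coeff (R := ℚ) l ((2 * (PowerSeries.exp ℚ + 1)⁻¹)^k)

/-- Higher-order Euler polynomials, from (2/(e^t+1))^k e^{xt}. -/
noncomputable def EulerP (k : ℕ) (x : ℚ) (l : ℕ) : ℚ :=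
  l.factorial * PowerSeries.coeff (R := ℚ) l
    ((2 * (PowerSeries.exp ℚ + 1)⁻¹)^k * PowerSeries.rescale x (PowerSeries.exp ℚ))

/-- Generalized binomial coefficient. -/
noncomputable def gbinom (x : ℚ) (m : ℕ) : ℚ := (∏ i ∈ Finset.range m, (x - i)) / m.factorial

/-- Binomial series (1+t)^x. -/
noncomputable def onePlusXPow (x : ℚ) : PowerSeries ℚ := PowerSeries.mk fun m => gbinom x m

/-- Higher-order Changhee polynomials of the first kind, from (2/(2+t))^k (1+t)^x. -/
noncomputable def ChP (k : ℕ) (x : ℚ) (n : ℕ) : ℚ :=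
  n.factorial * PowerSeries.coeff (R := ℚ) n
    ((2 * (2 + PowerSeries.X : PowerSeries ℚ)⁻¹)^k * onePlusXPow x)

/-- Higher-order Changhee numbers of the second kind, from (2/(2+t))^k (1+t)^k. -/
noncomputable def ChhN (k n : ℕ) : ℚ :=
  n.factorial * PowerSeries.coeff (R := ℚ) n
    ((2 * (2 + PowerSeries.X : PowerSeries ℚ)⁻¹)^k * (1 + PowerSeries.X)^k)

/-- Higher-order Changhee polynomials of the second kind, from (2/(2+t))^k (1+t)^{x+k}. -/
noncomputable def ChP2 (k : ℕ) (x : ℚ) (n : ℕ) : ℚ :=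
  n.factorial * PowerSeries.coeff (R := ℚ) n
    ((2 * (2 + PowerSeries.X : PowerSeries ℚ)⁻¹)^k * onePlusXPow (x + k))



noncomputable def ee : PowerSeries ℚ := PowerSeries.exp ℚ - 1

lemma constantCoeff_ee : constantCoeff (R := ℚ) ee = 0 := by
  simp [ee, PowerSeries.constantCoeff_exp]

lemma coeff_ee_pow_eq_zero {n l : ℕ} (h : l < n) : coeff (R := ℚ) l (ee ^ n) = 0 := by
  have hX : (X : PowerSeries ℚ) ^ n ∣ ee ^ n :=
    pow_dvd_pow_of_dvd (PowerSeries.X_dvd_iff.mpr constantCoeff_ee) n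
  exact PowerSeries.X_pow_dvd_iff.mp hX l h

noncomputable def comp (f : PowerSeries ℚ) : PowerSeries ℚ :=
  PowerSeries.mk fun l => ∑ m ∈ Finset.range (l + 1), coeff (R := ℚ) m f * coeff (R := ℚ) l (ee ^ m)

lemma coeff_comp (f : PowerSeries ℚ) (l : ℕ) :
    coeff (R := ℚ) l (comp f) = ∑ m ∈ Finset.range (l + 1), coeff (R := ℚ) m f * coeff (R := ℚ) l (ee ^ m) :=
  coeff_mk _ _

lemma coeff_comp_ext (f : PowerSeries ℚ) {l L : ℕ} (h : l ≤ L) :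
    coeff (R := ℚ) l (comp f) = ∑ m ∈ Finset.range (L + 1), coeff (R := ℚ) m f * coeff (R := ℚ) l (ee ^ m) := by
  rw [coeff_comp]
  apply Finset.sum_subset
  · exact Finset.range_subset_range.mpr (by omega)
  · intro m hm hm'
    simp only [Finset.mem_range, not_lt] at hm'
    rw [coeff_ee_pow_eq_zero (by omega), mul_zero]

lemma comp_C (a : ℚ) : comp (PowerSeries.C (R := ℚ) a) = PowerSeries.C (R := ℚ) a := by
  ext l
  rw [coeff_comp, Finset.sum_eq_single 0]
  · simp [PowerSeries.coeff_C]
  · intro m hm hm0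
    rw [PowerSeries.coeff_C, if_neg hm0, zero_mul]
  · simp

lemma comp_one : comp 1 = 1 := by
  simpa using comp_C 1

lemma comp_add (f g : PowerSeries ℚ) : comp (f + g) = comp f + comp g := by
  ext l
  simp [coeff_comp, add_mul, Finset.sum_add_distrib]

lemma comp_X : comp X = ee := by
  ext l
  rw [coeff_comp, Finset.sum_eq_single 1]
  · simp
  · intro m hm hm1
    rw [PowerSeries.coeff_X, if_neg hm1, zero_mul]
  · intro h
    simp only [Finset.mem_range, not_lt] at h
    have hl : l = 0 := by omega
    subst hl
    simp [ee, PowerSeries.constantCoeff_exp]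

lemma comp_C_mul (a : ℚ) (f : PowerSeries ℚ) :
    comp (PowerSeries.C (R := ℚ) a * f) = PowerSeries.C (R := ℚ) a * comp f := by
  ext l
  simp [coeff_comp, PowerSeries.coeff_C_mul, Finset.mul_sum, mul_assoc]

lemma comp_mul (f g : PowerSeries ℚ) : comp (f * g) = comp f * comp g := by
  ext l
  -- RHS
  have hR : coeff (R := ℚ) l (comp f * comp g)
      = ∑ n ∈ Finset.range (l+1), ∑ m ∈ Finset.range (l+1),
          coeff (R := ℚ) n f * coeff (R := ℚ) m g * coeff (R := ℚ) l (ee ^ (n + m)) := by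
    rw [PowerSeries.coeff_mul]
    have : ∀ p ∈ Finset.HasAntidiagonal.antidiagonal l,
        coeff (R := ℚ) p.1 (comp f) * coeff (R := ℚ) p.2 (comp g)
        = ∑ n ∈ Finset.range (l+1), ∑ m ∈ Finset.range (l+1),
            coeff (R := ℚ) n f * coeff (R := ℚ) m g * (coeff (R := ℚ) p.1 (ee ^ n) * coeff (R := ℚ) p.2 (ee ^ m)) := by
      intro p hp
      rw [Finset.HasAntidiagonal.mem_antidiagonal] at hp
      rw [coeff_comp_ext f (L := l) (by omega), coeff_comp_ext g (L := l) (by omega),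
        Finset.sum_mul_sum]
      apply Finset.sum_congr rfl
      intro n _
      apply Finset.sum_congr rfl
      intro m _
      ring
    rw [Finset.sum_congr rfl this, Finset.sum_comm]
    apply Finset.sum_congr rfl
    intro n _
    rw [Finset.sum_comm]
    apply Finset.sum_congr rfl
    intro m _
    rw [← Finset.mul_sum, pow_add, PowerSeries.coeff_mul]
  rw [hR, coeff_comp]
  -- LHS
  have hL : ∑ p ∈ Finset.range (l+1), coeff (R := ℚ) p (f * g) * coeff (R := ℚ) l (ee ^ p)
      = ∑ p ∈ Finset.range (l+1), ∑ q ∈ Finset.HasAntidiagonal.antidiagonal p,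
          coeff (R := ℚ) q.1 f * coeff (R := ℚ) q.2 g * coeff (R := ℚ) l (ee ^ (q.1 + q.2)) := by
    apply Finset.sum_congr rfl
    intro p hp
    rw [PowerSeries.coeff_mul, Finset.sum_mul]
    apply Finset.sum_congr rfl
    intro q hq
    rw [Finset.HasAntidiagonal.mem_antidiagonal] at hq
    rw [hq]
  rw [hL]
  -- reindex
  have hbi : (Finset.range (l+1)).biUnion (fun p => Finset.HasAntidiagonal.antidiagonal p)
      = (Finset.range (l+1) ×ˢ Finset.range (l+1)).filter (fun q => q.1 + q.2 ≤ l) := by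
    ext q
    simp only [Finset.mem_biUnion, Finset.mem_range, Finset.HasAntidiagonal.mem_antidiagonal,
      Finset.mem_filter, Finset.mem_product]
    constructor
    · rintro ⟨p, hp, rfl⟩; omega
    · intro h; exact ⟨q.1 + q.2, by omega, rfl⟩
  have hdisj : ∀ p ∈ Finset.range (l+1), ∀ p' ∈ Finset.range (l+1), p ≠ p' →
      Disjoint (Finset.HasAntidiagonal.antidiagonal p) (Finset.HasAntidiagonal.antidiagonal p') := by
    intro p _ p' _ hne
    refine Finset.disjoint_left.mpr ?_
    intro q hq hq'
    rw [Finset.HasAntidiagonal.mem_antidiagonal] at hq hq'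
    omega
  rw [← Finset.sum_biUnion hdisj, hbi]
  rw [Finset.sum_filter_of_ne]
  · rw [Finset.sum_product]
  · intro q hq hne
    by_contra h
    exact hne (by
      rw [coeff_ee_pow_eq_zero (by omega), mul_zero])

lemma comp_pow (f : PowerSeries ℚ) (k : ℕ) : comp (f ^ k) = (comp f) ^ k := by
  induction k with
  | zero => simpa using comp_one
  | succ k ih => rw [pow_succ, comp_mul, ih, pow_succ]

lemma constantCoeff_comp (f : PowerSeries ℚ) :
    constantCoeff (R := ℚ) (comp f) = constantCoeff (R := ℚ) f := by
  rw [← coeff_zero_eq_constantCoeff_apply, ← coeff_zero_eq_constantCoeff_apply, coeff_comp]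
  simp

lemma comp_inv (f : PowerSeries ℚ) (hf : constantCoeff (R := ℚ) f ≠ 0) :
    comp f⁻¹ = (comp f)⁻¹ := by
  have h1 : comp f * comp f⁻¹ = 1 := by
    rw [← comp_mul, PowerSeries.mul_inv_cancel f hf, comp_one]
  have h2 : constantCoeff (R := ℚ) (comp f) ≠ 0 := by rwa [constantCoeff_comp]
  rw [PowerSeries.eq_inv_iff_mul_eq_one h2]
  rw [mul_comm] at h1
  exact h1

lemma two_eq_C : (2 : PowerSeries ℚ) = PowerSeries.C (R := ℚ) 2 := (map_ofNat (PowerSeries.C (R := ℚ)) 2).symm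

lemma constantCoeff_two_add_X : constantCoeff (R := ℚ) (2 + X) ≠ 0 := by
  rw [map_add, two_eq_C]
  simp

lemma comp_two_add_X : comp (2 + X) = PowerSeries.exp ℚ + 1 := by
  rw [two_eq_C, comp_add, comp_C, comp_X, ee, ← two_eq_C]
  ring

lemma comp_G (k : ℕ) :
    comp ((2 * (2 + X : PowerSeries ℚ)⁻¹) ^ k) = (2 * (PowerSeries.exp ℚ + 1)⁻¹) ^ k := by
  rw [comp_pow]
  congr 1
  nth_rewrite 1 [two_eq_C]
  rw [comp_C_mul, comp_inv _ constantCoeff_two_add_X, comp_two_add_X, ← two_eq_C]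

lemma descPochhammer_eval_eq_prod (x : ℚ) (m : ℕ) :
    (descPochhammer ℚ m).eval x = ∏ i ∈ Finset.range m, (x - i) := by
  induction m with
  | zero => simp
  | succ m ih =>
      rw [descPochhammer_succ_right, Finset.prod_range_succ, ← ih]
      simp [mul_comm]

lemma gbinom_nat (N m : ℕ) : gbinom (N : ℚ) m = N.choose m := by
  rw [gbinom, ← descPochhammer_eval_eq_prod, descPochhammer_eval_eq_descFactorial,
    Nat.descFactorial_eq_factorial_mul_choose]
  push_cast
  rw [mul_comm, mul_div_assoc, div_self (by exact_mod_cast Nat.factorial_ne_zero m), mul_one]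

lemma coeff_one_add_X_pow (N m : ℕ) :
    coeff (R := ℚ) m ((1 + X : PowerSeries ℚ) ^ N) = N.choose m := by
  have hterm : ∀ k, (X : PowerSeries ℚ) ^ k * 1 ^ (N - k) * (N.choose k : PowerSeries ℚ)
      = PowerSeries.C (R := ℚ) (N.choose k) * X ^ k := by
    intro k
    rw [one_pow, mul_one, map_natCast (PowerSeries.C (R := ℚ)) (N.choose k), mul_comm]
  rw [add_comm, add_pow, map_sum, Finset.sum_congr rfl (fun k _ => by rw [hterm k])]
  simp only [PowerSeries.coeff_C_mul, PowerSeries.coeff_X_pow]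
  rw [Finset.sum_eq_single m]
  · simp
  · intro k _ hk
    rw [if_neg (Ne.symm hk), mul_zero]
  · intro h
    simp only [Finset.mem_range, not_lt] at h
    rw [Nat.choose_eq_zero_of_lt (by omega), Nat.cast_zero, zero_mul]

lemma onePlusXPow_nat (N : ℕ) : onePlusXPow (N : ℚ) = (1 + X : PowerSeries ℚ) ^ N := by
  ext m
  rw [onePlusXPow, coeff_mk, gbinom_nat, coeff_one_add_X_pow]

lemma comp_one_add_X : comp (1 + X) = PowerSeries.exp ℚ := by
  rw [comp_add, comp_one, comp_X, ee]
  ring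

lemma comp_onePlusXPow_nat (N : ℕ) :
    comp (onePlusXPow (N : ℚ)) = rescale ((N : ℚ)) (PowerSeries.exp ℚ) := by
  rw [onePlusXPow_nat, comp_pow, comp_one_add_X, PowerSeries.exp_pow_eq_rescale_exp]

lemma coeff_comp_onePlusXPow (x : ℚ) (l : ℕ) :
    coeff (R := ℚ) l (comp (onePlusXPow x))
      = ∑ m ∈ Finset.range (l + 1),
          (coeff (R := ℚ) l (ee ^ m) / m.factorial) * (descPochhammer ℚ m).eval x := by
  rw [coeff_comp]
  apply Finset.sum_congr rfl
  intro m _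
  rw [onePlusXPow, coeff_mk, gbinom, ← descPochhammer_eval_eq_prod]
  ring

lemma comp_onePlusXPow (x : ℚ) :
    comp (onePlusXPow x) = rescale x (PowerSeries.exp ℚ) := by
  ext l
  set P : Polynomial ℚ :=
    (∑ m ∈ Finset.range (l + 1),
      Polynomial.C (coeff (R := ℚ) l (ee ^ m) / m.factorial) * descPochhammer ℚ m)
    - Polynomial.C ((1 : ℚ) / l.factorial) * Polynomial.X ^ l with hP
  have hevalP : ∀ y : ℚ, P.eval y
      = coeff (R := ℚ) l (comp (onePlusXPow y)) - coeff (R := ℚ) l (rescale y (PowerSeries.exp ℚ)) := by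
    intro y
    rw [hP, coeff_comp_onePlusXPow, PowerSeries.coeff_rescale, PowerSeries.coeff_exp]
    simp [Polynomial.eval_finset_sum]
    ring_nf
  have hroot : ∀ N : ℕ, P.eval (N : ℚ) = 0 := by
    intro N
    rw [hevalP, comp_onePlusXPow_nat, sub_self]
  have hP0 : P = 0 := by
    apply Polynomial.eq_zero_of_infinite_isRoot
    refine Set.Infinite.mono ?_ (Set.infinite_range_of_injective
      (Nat.cast_injective : Function.Injective ((↑) : ℕ → ℚ)))
    rintro y ⟨N, rfl⟩
    exact hroot N
  have h := hevalP x
  rw [hP0, Polynomial.eval_zero] at h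
  exact (sub_eq_zero.mp h.symm)

lemma key1 (k : ℕ) (x : ℚ) :
    comp ((2 * (2 + X : PowerSeries ℚ)⁻¹) ^ k * onePlusXPow x)
      = (2 * (PowerSeries.exp ℚ + 1)⁻¹) ^ k * rescale x (PowerSeries.exp ℚ) := by
  rw [comp_mul, comp_G, comp_onePlusXPow]

lemma stirling2_eq (l m : ℕ) :
    stirling2 l m = (l.factorial : ℚ) / m.factorial * coeff (R := ℚ) l (ee ^ m) := rfl

lemma stirling2_eq_zero_of_lt {l m : ℕ} (h : l < m) : stirling2 l m = 0 := by
  rw [stirling2_eq, coeff_ee_pow_eq_zero h, mul_zero]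

lemma EulerP_eq (k : ℕ) (x : ℚ) (l : ℕ) :
    EulerP k x l = ∑ m ∈ Finset.range (l + 1), stirling2 l m * ChP k x m := by
  have hterm : ∀ m, stirling2 l m * ChP k x m
      = (l.factorial : ℚ) *
        (coeff (R := ℚ) m ((2 * (2 + X : PowerSeries ℚ)⁻¹) ^ k * onePlusXPow x) * coeff (R := ℚ) l (ee ^ m)) := by
    intro m
    rw [stirling2_eq, ChP]
    have hm : (m.factorial : ℚ) ≠ 0 := by exact_mod_cast m.factorial_ne_zero
    field_simp
  rw [Finset.sum_congr rfl (fun m _ => hterm m), ← Finset.mul_sum, ← coeff_comp, key1, EulerP]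

lemma stirling_id (x : ℚ) (l : ℕ) :
    ∑ m ∈ Finset.range (l + 1), stirling2 l m * ∏ i ∈ Finset.range m, (x - i) = x ^ l := by
  have h := congrArg (coeff (R := ℚ) l) (comp_onePlusXPow x)
  rw [coeff_comp_onePlusXPow, PowerSeries.coeff_rescale, PowerSeries.coeff_exp] at h
  have hl : (l.factorial : ℚ) ≠ 0 := by exact_mod_cast l.factorial_ne_zero
  have hterm : ∀ m, stirling2 l m * ∏ i ∈ Finset.range m, (x - i)
      = (l.factorial : ℚ) * ((coeff (R := ℚ) l (ee ^ m) / m.factorial) * (descPochhammer ℚ m).eval x) := by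
    intro m
    rw [stirling2_eq, descPochhammer_eval_eq_prod]
    ring
  rw [Finset.sum_congr rfl (fun m _ => hterm m), ← Finset.mul_sum, h]
  simp only [Algebra.algebraMap_self, RingHom.id_apply]
  field_simp

lemma descPochhammer_eq_prod (m : ℕ) :
    descPochhammer ℚ m = ∏ i ∈ Finset.range m, (Polynomial.X - (i : Polynomial ℚ)) := by
  induction m with
  | zero => simp
  | succ m ih =>
      rw [descPochhammer_succ_right, Finset.prod_range_succ, ← ih]

lemma stirling1_eq_coeff (n l : ℕ) : stirling1 n l = (descPochhammer ℚ n).coeff l := by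
  rw [stirling1, descPochhammer_eq_prod]

lemma poly_id (l : ℕ) :
    ∑ m ∈ Finset.range (l + 1), Polynomial.C (stirling2 l m) * descPochhammer ℚ m
      = (Polynomial.X : Polynomial ℚ) ^ l := by
  apply Polynomial.funext
  intro y
  rw [Polynomial.eval_finset_sum, Polynomial.eval_pow, Polynomial.eval_X]
  rw [← stirling_id y l]
  apply Finset.sum_congr rfl
  intro m _
  rw [Polynomial.eval_mul, Polynomial.eval_C, descPochhammer_eval_eq_prod]

lemma sum_s2_s1 {l n : ℕ} (hl : l ≤ n) (j : ℕ) :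
    ∑ m ∈ Finset.range (n + 1), stirling2 l m * stirling1 m j = if j = l then 1 else 0 := by
  have h1 : ∑ m ∈ Finset.range (n + 1), stirling2 l m * stirling1 m j
      = ∑ m ∈ Finset.range (l + 1), stirling2 l m * stirling1 m j := by
    symm
    apply Finset.sum_subset (Finset.range_subset_range.mpr (by omega))
    intro m _ hm
    simp only [Finset.mem_range, not_lt] at hm
    rw [stirling2_eq_zero_of_lt (by omega), zero_mul]
  rw [h1, ← Polynomial.coeff_X_pow l j, ← poly_id, Polynomial.finset_sum_coeff]
  apply Finset.sum_congr rfl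
  intro m _
  rw [Polynomial.coeff_C_mul, stirling1_eq_coeff]

lemma sum_s1_s2 (n m : ℕ) (hm : m ≤ n) :
    ∑ l ∈ Finset.range (n + 1), stirling1 n l * stirling2 l m = if m = n then 1 else 0 := by
  set A : Matrix (Fin (n + 1)) (Fin (n + 1)) ℚ := fun i j => stirling1 i j with hA
  set B : Matrix (Fin (n + 1)) (Fin (n + 1)) ℚ := fun i j => stirling2 i j with hB
  have hBA : B * A = 1 := by
    ext i j
    rw [Matrix.mul_apply, Matrix.one_apply]
    have : ∑ l : Fin (n + 1), B i l * A l j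
        = ∑ l ∈ Finset.range (n + 1), stirling2 i l * stirling1 l j := by
      rw [Finset.sum_range fun l => stirling2 i l * stirling1 l j]
    rw [this, sum_s2_s1 (Nat.lt_succ_iff.mp i.isLt) j]
    by_cases h : i = j
    · subst h; simp
    · rw [if_neg h, if_neg (fun hc => h (Fin.ext hc).symm)]
  have hAB : A * B = 1 := mul_eq_one_comm.mpr hBA
  have := congrFun (congrFun hAB ⟨n, by omega⟩) ⟨m, by omega⟩
  rw [Matrix.mul_apply, Matrix.one_apply] at this
  have hsum : ∑ l : Fin (n + 1), A ⟨n, by omega⟩ l * B l ⟨m, by omega⟩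
      = ∑ l ∈ Finset.range (n + 1), stirling1 n l * stirling2 l m := by
    rw [Finset.sum_range fun l => stirling1 n l * stirling2 l m]
  rw [hsum] at this
  rw [this]
  by_cases h : m = n
  · subst h; simp
  · rw [if_neg (fun hc => h (by simpa using (Fin.ext_iff.mp hc).symm)), if_neg h]

theorem changhee_poly_eq_stirling1_euler (n : ℕ) (k : ℕ) (hk : 0 < k) (x : ℚ) :
    ChP k x n = ∑ l ∈ Finset.range (n+1), stirling1 n l * EulerP k x l := by
  have h1 : ∀ l ∈ Finset.range (n + 1),
      stirling1 n l * EulerP k x l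
        = ∑ m ∈ Finset.range (n + 1), stirling1 n l * (stirling2 l m * ChP k x m) := by
    intro l hl
    rw [Finset.mem_range] at hl
    rw [EulerP_eq, Finset.mul_sum]
    apply Finset.sum_subset (Finset.range_subset_range.mpr (by omega))
    intro m _ hm
    simp only [Finset.mem_range, not_lt] at hm
    rw [stirling2_eq_zero_of_lt (by omega), zero_mul, mul_zero]
  rw [Finset.sum_congr rfl h1, Finset.sum_comm]
  have h2 : ∀ m ∈ Finset.range (n + 1),
      ∑ l ∈ Finset.range (n + 1), stirling1 n l * (stirling2 l m * ChP k x m)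
        = (if m = n then 1 else 0) * ChP k x m := by
    intro m hm
    rw [Finset.mem_range] at hm
    rw [← sum_s1_s2 n m (by omega), Finset.sum_mul]
    apply Finset.sum_congr rfl
    intro l _
    ring
  rw [Finset.sum_congr rfl h2, Finset.sum_eq_single_of_mem n (Finset.self_mem_range_succ n)
    (fun m _ hm => by rw [if_neg hm, zero_mul]), if_pos rfl, one_mul]
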